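/- arXiv:2011.11225 — 2 statements merged into one kernel-verified Lean document; each statement's English description precedes it below -/
import Mathlib

section
/- Let N = p_1 ··· p_r be square-free. There exists a Kakeya set S ⊆ (Z/NZ)^n with |S| ≤ ∏_{i=1}^r (p_i^n / 2^{n−1} + C · p_i^{n−1}) for an absolute constant C > 1. -/
open Finset

/-- A direction in `(Z/NZ)^n`: a vector whose reduction modulo every prime factor of `N`
is non-zero. -/
def IsDirection {N : ℕ} {n : ℕ} (b : Fin n → ZMod N) : Prop :=
  ∀ (q : ℕ), q.Prime → ∀ (h : q ∣ N), (fun i => ZMod.castHom h (ZMod q) (b i)) ≠ 0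

/-- A Kakeya set in `(Z/NZ)^n`: contains a line in every direction. -/
def IsKakeyaSet {N : ℕ} {n : ℕ} (S : Finset (Fin n → ZMod N)) : Prop :=
  ∀ b : Fin n → ZMod N, IsDirection b →
    ∃ a : Fin n → ZMod N, ∀ t : ZMod N, a + t • b ∈ S

open Finset

lemma two_mul_card_image_le (p : ℕ) [Fact p.Prime] (hp2 : p ≠ 2) (t : ZMod p) :
    2 * ((univ : Finset (ZMod p)).image (fun b : ZMod p => b * t + b ^ 2)).card ≤ p + 1 := by
  classical
  set f : ZMod p → ZMod p := fun b => b * t + b ^ 2 with hf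
  set I := (univ : Finset (ZMod p)).image f with hI
  have h2ne : (2 : ZMod p) ≠ 0 := by
    intro h
    have hd : (p : ℕ) ∣ 2 := by
      have : ((2 : ℕ) : ZMod p) = 0 := by exact_mod_cast h
      exact (ZMod.natCast_eq_zero_iff 2 p).mp this
    exact hp2 ((Nat.prime_dvd_prime_iff_eq Fact.out Nat.prime_two).mp hd)
  set u : ZMod p := -(t * 2⁻¹) with hu
  set y₀ : ZMod p := f u with hy₀
  have hfib : ∀ y ∈ I.erase y₀, 2 ≤ (univ.filter (fun b => f b = y)).card := by
    intro y hy'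
    have hyne : y ≠ y₀ := Finset.ne_of_mem_erase hy'
    have hy : y ∈ I := Finset.mem_of_mem_erase hy'
    obtain ⟨b, -, hb⟩ := Finset.mem_image.mp hy
    have hfb' : f (-b - t) = y := by
      rw [← hb]; simp only [hf]; ring
    have hbne : b ≠ -b - t := by
      intro h
      apply hyne
      have h2b : b * 2 = -t := by linear_combination h
      have hbu : b = u := by
        calc b = b * 2 * 2⁻¹ := by rw [mul_assoc, mul_inv_cancel₀ h2ne, mul_one]
          _ = u := by rw [h2b, hu]; ring
      rw [← hb, hbu, hy₀]
    have hsub : ({b, -b - t} : Finset (ZMod p)) ⊆ univ.filter (fun b => f b = y) := by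
      intro x hx
      simp only [Finset.mem_insert, Finset.mem_singleton] at hx
      rcases hx with rfl | rfl <;> simp [hb, hfb']
    calc 2 = ({b, -b - t} : Finset (ZMod p)).card := (Finset.card_pair hbne).symm
      _ ≤ _ := Finset.card_le_card hsub
  have hcardsum : ∑ y ∈ I, (univ.filter (fun b => f b = y)).card = p := by
    rw [← Finset.card_eq_sum_card_fiberwise (fun x _ => Finset.mem_image_of_mem f (mem_univ x))]
    simp [ZMod.card p]
  have hsum2 : (I.erase y₀).card * 2 ≤ ∑ y ∈ I.erase y₀, (univ.filter (fun b => f b = y)).card := by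
    simpa using Finset.card_nsmul_le_sum (I.erase y₀) _ 2 hfib
  by_cases h0 : y₀ ∈ I
  · have h1 : 1 ≤ (univ.filter (fun b => f b = y₀)).card := by
      refine Finset.card_pos.mpr ⟨u, ?_⟩
      simp [hy₀]
    have hsplit : ∑ y ∈ I.erase y₀, (univ.filter (fun b => f b = y)).card
        + (univ.filter (fun b => f b = y₀)).card
        = ∑ y ∈ I, (univ.filter (fun b => f b = y)).card :=
      Finset.sum_erase_add I (fun y => (univ.filter (fun b => f b = y)).card) h0
    have hce : (I.erase y₀).card = I.card - 1 := Finset.card_erase_of_mem h0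
    have hIpos : 1 ≤ I.card := Finset.card_pos.mpr ⟨y₀, h0⟩
    omega
  · have : I.erase y₀ = I := Finset.erase_eq_of_notMem h0
    rw [this] at hsum2
    omega



lemma geom_bound (p : ℝ) (hp : 3 ≤ p) :
    ∀ m : ℕ, p * ∑ i ∈ range (m + 1), ((p + 1) / 2) ^ i ≤ p ^ (m + 1) / 2 ^ m + 10 * p ^ m := by
  intro m
  induction m with
  | zero => simp
  | succ m ih =>
    have hppos : (0:ℝ) < p := by linarith
    have hq : (1:ℝ) ≤ 2 ^ m := one_le_pow₀ (by norm_num)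
    have hpm : (1:ℝ) ≤ p ^ m := one_le_pow₀ (by linarith)
    have h2q : (0:ℝ) < 2 ^ m := by positivity
    rw [geom_sum_succ]
    have key : p * ((p + 1) / 2 * ∑ i ∈ range (m + 1), ((p + 1) / 2) ^ i + 1)
        = (p + 1) / 2 * (p * ∑ i ∈ range (m + 1), ((p + 1) / 2) ^ i) + p := by ring
    rw [key]
    have step : (p + 1) / 2 * (p * ∑ i ∈ range (m + 1), ((p + 1) / 2) ^ i) + p
        ≤ (p + 1) / 2 * (p ^ (m + 1) / 2 ^ m + 10 * p ^ m) + p := by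
      have hpos : (0:ℝ) ≤ (p + 1) / 2 := by linarith
      nlinarith [mul_le_mul_of_nonneg_left ih hpos]
    refine step.trans ?_
    have e1 : p ^ (m + 2) = p * p ^ (m+1) := by ring
    have e2 : p ^ (m + 1) = p * p ^ m := by ring
    have e3 : (2:ℝ) ^ (m + 1) = 2 * 2 ^ m := by ring
    have hc : (0:ℝ) < 2 * 2 ^ m := by positivity
    rw [← mul_le_mul_iff_of_pos_right hc]
    have l : ((p + 1) / 2 * (p ^ (m + 1) / 2 ^ m + 10 * p ^ m) + p) * (2 * 2 ^ m)
        = (p + 1) * p ^ (m + 1) + 10 * (p + 1) * p ^ m * 2 ^ m + 2 * p * 2 ^ m := by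
      field_simp
    have r : (p ^ (m + 1 + 1) / (2 * 2 ^ m) + 10 * p ^ (m + 1)) * (2 * 2 ^ m)
        = p ^ (m + 2) + 20 * p ^ (m + 1) * 2 ^ m := by
      field_simp
      ring
    rw [e3, l, r, e1, e2]
    nlinarith [mul_le_mul_of_nonneg_right hpm (le_of_lt h2q), mul_pos hppos h2q,
      mul_le_mul_of_nonneg_right (mul_le_mul_of_nonneg_left hpm (le_of_lt hppos)) (le_of_lt h2q),
      mul_le_mul_of_nonneg_left hq (le_of_lt hppos)]


lemma prime_kakeya (p n : ℕ) (hp : p.Prime) (hn : 1 ≤ n) :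
    ∃ K : Finset (Fin n → ZMod p), IsKakeyaSet K ∧
      (K.card : ℝ) ≤ (p : ℝ) ^ n / 2 ^ (n - 1) + 10 * (p : ℝ) ^ (n - 1) := by
  classical
  haveI : Fact p.Prime := ⟨hp⟩
  obtain ⟨m, rfl⟩ : ∃ m, n = m + 1 := ⟨n - 1, (Nat.succ_pred_eq_of_pos hn).symm⟩
  have hmm : m + 1 - 1 = m := rfl
  by_cases hp2 : p = 2
  · -- use the whole space
    refine ⟨univ, fun b _ => ⟨0, fun t => mem_univ _⟩, ?_⟩
    have hcard : (univ : Finset (Fin (m+1) → ZMod p)).card = p ^ (m+1) := by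
      rw [Finset.card_univ, Fintype.card_fun]
      simp [ZMod.card]
    rw [hcard, hmm, hp2]
    push_cast
    have h1 : (2:ℝ) ^ (m+1) = 2 * 2 ^ m := by ring
    have h2 : (0:ℝ) ≤ (2:ℝ) ^ (m+1) / 2 ^ m := by positivity
    nlinarith [one_le_pow₀ (show (1:ℝ) ≤ 2 by norm_num) (n := m)]
  · -- odd prime: Mockenhaupt–Tao type construction
    have hp3 : 3 ≤ p := by
      have := hp.two_le
      omega
    set n := m + 1
    set Q : ZMod p → Finset (ZMod p) :=
      fun t => (univ : Finset (ZMod p)).image (fun b => b * t + b ^ 2) with hQ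
    set E : Fin n × ZMod p → (Fin n → Finset (ZMod p)) :=
      fun it j => if j < it.1 then {0} else if j = it.1 then {it.2} else Q it.2 with hE
    set K : Finset (Fin n → ZMod p) :=
      univ.biUnion (fun it => Fintype.piFinset (E it)) with hK
    refine ⟨K, ?_, ?_⟩
    · -- Kakeya property
      intro b hdir
      have hb : b ≠ 0 := by
        intro h
        apply hdir p hp dvd_rfl
        funext i
        rw [h]
        simp
      have hne : (univ.filter (fun i => b i ≠ 0)).Nonempty := by
        rw [Finset.filter_nonempty_iff]
        simpa [Function.ne_iff] using hb
      set i₀ := (univ.filter (fun i => b i ≠ 0)).min' hne with hi₀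
      have hbi₀ : b i₀ ≠ 0 := (Finset.mem_filter.mp (Finset.min'_mem _ hne)).2
      have hmin : ∀ j, j < i₀ → b j = 0 := by
        intro j hj
        by_contra h
        exact absurd (Finset.min'_le _ j (Finset.mem_filter.mpr ⟨mem_univ _, h⟩))
          (not_le.mpr hj)
      refine ⟨fun j => if j < i₀ then 0 else if j = i₀ then 0 else (b j * (b i₀)⁻¹) ^ 2,
        fun t => ?_⟩
      rw [Finset.mem_biUnion]
      refine ⟨(i₀, t * b i₀), mem_univ _, Fintype.mem_piFinset.mpr fun j => ?_⟩
      rcases lt_trichotomy j i₀ with hj | hj | hj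
      · simp only [hE, hj, if_pos, Pi.add_apply, Pi.smul_apply, smul_eq_mul]
        simp [hj, hmin j hj]
      · subst hj
        simp only [hE, lt_irrefl, if_neg, if_pos, Pi.add_apply, Pi.smul_apply, smul_eq_mul]
        simp
      · have h1 : ¬ j < i₀ := not_lt.mpr (le_of_lt hj)
        have h2 : j ≠ i₀ := ne_of_gt hj
        simp only [hE, h1, h2, if_neg, if_false, Pi.add_apply, Pi.smul_apply, smul_eq_mul,
          ite_false]
        rw [hQ]
        simp only [Finset.mem_image, Finset.mem_univ, true_and]
        refine ⟨b j * (b i₀)⁻¹, ?_⟩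
        field_simp
        ring
    · -- cardinality bound
      set r : ℝ := ((p : ℝ) + 1) / 2 with hr
      have hr1 : (1:ℝ) ≤ r := by
        rw [hr]
        have : (3:ℝ) ≤ (p:ℝ) := by exact_mod_cast hp3
        linarith
      have hQle : ∀ t : ZMod p, ((Q t).card : ℝ) ≤ r := by
        intro t
        have := two_mul_card_image_le p hp2 t
        rw [hr]
        have h2 : (2 * (Q t).card : ℝ) ≤ (p : ℝ) + 1 := by exact_mod_cast this
        linarith
      have step1 : (K.card : ℝ) ≤ ∑ it : Fin n × ZMod p, ((Fintype.piFinset (E it)).card : ℝ) := by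
        exact_mod_cast Nat.cast_le.mpr (Finset.card_biUnion_le)
      have step2 : ∀ it : Fin n × ZMod p,
          ((Fintype.piFinset (E it)).card : ℝ) ≤ r ^ (m - (it.1 : ℕ)) := by
        intro it
        rw [Fintype.card_piFinset]
        push_cast
        have hle : ∀ j : Fin n, (((E it j).card : ℝ)) ≤ (if it.1 < j then r else 1) := by
          intro j
          simp only [hE]
          rcases lt_trichotomy j it.1 with hj | hj | hj
          · rw [if_pos hj, if_neg (not_lt.mpr (le_of_lt hj))]
            simp
          · subst hj
            rw [if_neg (lt_irrefl _), if_pos rfl, if_neg (lt_irrefl _)]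
            simp
          · rw [if_neg (not_lt.mpr (le_of_lt hj)), if_neg (ne_of_gt hj), if_pos hj]
            exact hQle _
        calc (∏ j : Fin n, ((E it j).card : ℝ))
            ≤ ∏ j : Fin n, (if it.1 < j then r else 1) := by
              refine Finset.prod_le_prod (fun j _ => by positivity) (fun j _ => hle j)
          _ = ∏ j ∈ univ.filter (fun j => it.1 < j), r := (Finset.prod_filter _ _).symm
          _ = r ^ (univ.filter (fun j => it.1 < j)).card := Finset.prod_const r
          _ = r ^ (m - (it.1 : ℕ)) := by
              congr 1
              rw [Finset.filter_lt_eq_Ioi, Fin.card_Ioi]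
              omega
      have step3 : (K.card : ℝ) ≤ (p : ℝ) * ∑ i ∈ range n, r ^ i := by
        refine step1.trans ?_
        calc (∑ it : Fin n × ZMod p, ((Fintype.piFinset (E it)).card : ℝ))
            ≤ ∑ it : Fin n × ZMod p, r ^ (m - (it.1 : ℕ)) :=
              Finset.sum_le_sum (fun it _ => step2 it)
          _ = ∑ i : Fin n, ∑ t : ZMod p, r ^ (m - (i : ℕ)) := by
              rw [Fintype.sum_prod_type]
          _ = (p : ℝ) * ∑ i : Fin n, r ^ (m - (i : ℕ)) := by
              rw [Finset.mul_sum]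
              refine Finset.sum_congr rfl fun i _ => ?_
              rw [Finset.sum_const, Finset.card_univ, ZMod.card, nsmul_eq_mul]
          _ = (p : ℝ) * ∑ i ∈ range n, r ^ (m - i) := by
              rw [Fin.sum_univ_eq_sum_range (fun i => r ^ (m - i))]
          _ = (p : ℝ) * ∑ i ∈ range n, r ^ i := by
              congr 1
              have := Finset.sum_range_reflect (fun i => r ^ i) n
              have hn1 : n - 1 = m := rfl
              simpa [hn1] using this
      refine step3.trans ?_
      have h3 : (3:ℝ) ≤ (p : ℝ) := by exact_mod_cast hp3
      simpa [hmm] using geom_bound (p : ℝ) h3 m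

lemma combine {a b n : ℕ} (hab : a.Coprime b)
    (Sa : Finset (Fin n → ZMod a)) (Sb : Finset (Fin n → ZMod b))
    (h1 : IsKakeyaSet Sa) (h2 : IsKakeyaSet Sb) :
    ∃ S : Finset (Fin n → ZMod (a * b)), IsKakeyaSet S ∧ S.card ≤ Sa.card * Sb.card := by
  classical
  set e : ZMod (a * b) ≃+* ZMod a × ZMod b := ZMod.chineseRemainder hab with he
  set φ : (Fin n → ZMod a) × (Fin n → ZMod b) → (Fin n → ZMod (a * b)) :=
    fun uv => fun i => e.symm (uv.1 i, uv.2 i) with hφ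
  refine ⟨(Sa ×ˢ Sb).image φ, ?_, ?_⟩
  · intro β hβ
    -- reduced directions
    have hda : IsDirection (fun i => (e (β i)).1) := by
      intro q hq hqa
      have hcomp : (ZMod.castHom hqa (ZMod q)).comp
          ((RingHom.fst (ZMod a) (ZMod b)).comp (e : ZMod (a*b) →+* ZMod a × ZMod b))
          = ZMod.castHom (hqa.trans (dvd_mul_right a b)) (ZMod q) := RingHom.ext_zmod _ _
      have := hβ q hq (hqa.trans (dvd_mul_right a b))
      intro hcontra
      apply this
      funext i
      have := congrArg (fun f => f (β i)) hcomp
      simp only [RingHom.comp_apply] at this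
      rw [← this]
      exact congrFun hcontra i
    have hdb : IsDirection (fun i => (e (β i)).2) := by
      intro q hq hqb
      have hcomp : (ZMod.castHom hqb (ZMod q)).comp
          ((RingHom.snd (ZMod a) (ZMod b)).comp (e : ZMod (a*b) →+* ZMod a × ZMod b))
          = ZMod.castHom (hqb.trans (dvd_mul_left b a)) (ZMod q) := RingHom.ext_zmod _ _
      have := hβ q hq (hqb.trans (dvd_mul_left b a))
      intro hcontra
      apply this
      funext i
      have := congrArg (fun f => f (β i)) hcomp
      simp only [RingHom.comp_apply] at this
      rw [← this]
      exact congrFun hcontra i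
    obtain ⟨α₁, hα₁⟩ := h1 _ hda
    obtain ⟨α₂, hα₂⟩ := h2 _ hdb
    refine ⟨fun i => e.symm (α₁ i, α₂ i), fun t => ?_⟩
    rw [Finset.mem_image]
    refine ⟨(α₁ + (e t).1 • (fun i => (e (β i)).1), α₂ + (e t).2 • (fun i => (e (β i)).2)),
      Finset.mem_product.mpr ⟨hα₁ _, hα₂ _⟩, ?_⟩
    funext i
    simp only [hφ, Pi.add_apply, Pi.smul_apply, smul_eq_mul]
    apply e.injective
    rw [RingEquiv.apply_symm_apply]
    rw [map_add, map_mul, RingEquiv.apply_symm_apply]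
    rw [Prod.ext_iff]
    constructor <;> simp [Prod.fst_mul, Prod.snd_mul, Prod.fst_add, Prod.snd_add]
  · calc ((Sa ×ˢ Sb).image φ).card ≤ (Sa ×ˢ Sb).card := Finset.card_image_le
      _ = Sa.card * Sb.card := Finset.card_product _ _

lemma kakeya_main (n : ℕ) (hn : 1 ≤ n) :
    ∀ N : ℕ, Squarefree N →
    ∃ S : Finset (Fin n → ZMod N), IsKakeyaSet S ∧
      (S.card : ℝ) ≤ ∏ q ∈ N.primeFactors, ((q : ℝ) ^ n / 2 ^ (n - 1) + 10 * (q : ℝ) ^ (n - 1)) := by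
  intro N
  induction N using Nat.strong_induction_on with
  | _ N ih =>
  intro hsq
  have hN0 : N ≠ 0 := hsq.ne_zero
  by_cases hN1 : N = 1
  · subst hN1
    refine ⟨univ, fun b _ => ⟨0, fun t => mem_univ _⟩, ?_⟩
    have hcard : (univ : Finset (Fin n → ZMod 1)).card = 1 := by
      rw [Finset.card_univ, Fintype.card_fun]
      simp
    rw [hcard]
    simp
  · set p := N.minFac with hpdef
    have hp : p.Prime := Nat.minFac_prime hN1
    have hpd : p ∣ N := Nat.minFac_dvd N
    set M := N / p with hMdef
    have hNe : N = p * M := (Nat.mul_div_cancel' hpd).symm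
    have hM0 : M ≠ 0 := by
      intro h
      rw [h, mul_zero] at hNe
      exact hN0 hNe
    have hpM : ¬ p ∣ M := by
      intro h
      obtain ⟨k, hk⟩ := h
      have : p * p ∣ N := ⟨k, by rw [hNe, hk]; ring⟩
      exact hp.one_lt.ne' (Nat.isUnit_iff.mp (hsq p this))
    have hcop : p.Coprime M := (Nat.Prime.coprime_iff_not_dvd hp).mpr hpM
    have hMsq : Squarefree M := hsq.squarefree_of_dvd (Nat.div_dvd_of_dvd hpd)
    have hMlt : M < N := Nat.div_lt_self (Nat.pos_of_ne_zero hN0) hp.one_lt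
    obtain ⟨SM, hSM, hSMcard⟩ := ih M hMlt hMsq
    obtain ⟨Sp, hSp, hSpcard⟩ := prime_kakeya p n hp hn
    obtain ⟨S, hS, hScard⟩ := combine hcop Sp SM hSp hSM
    have hfac : (p * M).primeFactors = insert p M.primeFactors := by
      rw [Nat.primeFactors_mul hp.ne_zero hM0, Nat.Prime.primeFactors hp]
      ext x
      simp [or_comm]
    have hpnotmem : p ∉ M.primeFactors := fun h => hpM (Nat.dvd_of_mem_primeFactors h)
    rw [hNe]
    refine ⟨S, hS, ?_⟩
    rw [hfac, Finset.prod_insert hpnotmem]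
    calc (S.card : ℝ) ≤ (Sp.card : ℝ) * (SM.card : ℝ) := by exact_mod_cast hScard
      _ ≤ ((p : ℝ) ^ n / 2 ^ (n - 1) + 10 * (p : ℝ) ^ (n - 1)) *
          ∏ q ∈ M.primeFactors, ((q : ℝ) ^ n / 2 ^ (n - 1) + 10 * (q : ℝ) ^ (n - 1)) := by
        apply mul_le_mul hSpcard hSMcard (Nat.cast_nonneg _)
        positivity

/-- There is an absolute constant `C > 1` such that for every square-free
`N = p_1 ⋯ p_r` and every `n ≥ 1` there is a Kakeya set `S ⊆ (Z/NZ)^n` with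
`|S| ≤ ∏ (p_i^n / 2^{n-1} + C p_i^{n-1})`. -/
theorem kakeya_squarefree_upper_bound :
    ∃ C : ℝ, 1 < C ∧ ∀ (N n : ℕ), Squarefree N → 1 ≤ n →
      ∃ S : Finset (Fin n → ZMod N), IsKakeyaSet S ∧
        (S.card : ℝ) ≤
          ∏ q ∈ N.primeFactors, ((q : ℝ) ^ n / 2 ^ (n - 1) + C * (q : ℝ) ^ (n - 1)) := by
  refine ⟨10, by norm_num, fun N n hsq hn => kakeya_main n hn N hsq⟩
end

section
/- Let p be prime and k, n ≥ 1. Every Kakeya set S ⊆ (Z/p^k Z)^n satisfies |S| ≥ rank_{F_p}(W_{p^k,n}), where W_{p^k,n} is the p^{kn} × p^{kn} 0-1 matrix with rows and columns indexed by (Z/p^k Z)^n whose (x,y) entry is 1 iff ⟨x,y⟩ = 0 mod p^k. -/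
open scoped BigOperators

section Minors

open Matrix

variable {F : Type*} [Field F] {m n : Type*} [Fintype m] [Fintype n]

private lemma exists_indep_cols (M : Matrix m n F) :
    ∃ g : Fin M.rank → n, LinearIndependent F (fun j i => M i (g j)) := by
  classical
  obtain ⟨b, hbs, hspan, hind⟩ := exists_linearIndependent F (Set.range Mᵀ)
  have hbfin : b.Finite := (Set.finite_range Mᵀ).subset hbs
  haveI := hbfin.fintype
  have hcard : M.rank = Fintype.card b := by
    rw [M.rank_eq_finrank_span_cols]
    change Module.finrank F (Submodule.span F (Set.range Mᵀ)) = _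
    rw [← hspan, finrank_span_set_eq_card hind,
      Set.toFinset_card]
  let e : Fin M.rank ≃ b := (Fintype.equivFinOfCardEq hcard.symm).symm
  have hmem : ∀ j : Fin M.rank, ((e j : b) : m → F) ∈ Set.range Mᵀ := fun j => hbs (e j).2
  choose g hg using fun j => hmem j
  refine ⟨g, ?_⟩
  have : (fun j i => M i (g j)) = fun j => ((e j : b) : m → F) := by
    funext j
    exact hg j
  rw [this]
  exact hind.comp e e.injective

private lemma exists_det_ne_zero (M : Matrix m n F) :
    ∃ (f : Fin M.rank → m) (g : Fin M.rank → n), (M.submatrix f g).det ≠ 0 := by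
  classical
  obtain ⟨g, hg⟩ := exists_indep_cols M
  let N : Matrix m (Fin M.rank) F := M.submatrix id g
  have hN : N.rank = M.rank := by
    rw [N.rank_eq_finrank_span_cols]
    change Module.finrank F (Submodule.span F (Set.range Nᵀ)) = _
    have h1 : Set.range Nᵀ = Set.range (fun j i => M i (g j)) := rfl
    rw [h1, finrank_span_eq_card hg, Fintype.card_fin]
  have hNT : Nᵀ.rank = M.rank := by rw [Matrix.rank_transpose, hN]
  obtain ⟨f₀, hf₀⟩ := exists_indep_cols Nᵀ
  let f : Fin M.rank → m := f₀ ∘ Fin.cast hNT.symm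
  have hf : LinearIndependent F (fun j i => Nᵀ i (f j)) :=
    hf₀.comp (Fin.cast hNT.symm) (Fin.cast_injective _)
  refine ⟨f, g, ?_⟩
  have hrows : LinearIndependent F (fun j i => (M.submatrix f g) j i) := hf
  intro hdet
  obtain ⟨v, hv0, hv⟩ := Matrix.exists_vecMul_eq_zero_iff.mpr hdet
  have : ∀ j, v j = 0 := by
    refine Fintype.linearIndependent_iff.mp hrows v ?_
    funext i
    have := congrFun hv i
    simpa [Matrix.vecMul, dotProduct] using this
  exact hv0 (funext this)

private lemma rank_map_le_rank_map {A : Type*} [CommRing A] [IsDomain A]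
    {F K : Type*} [Field F] [Field K]
    (π : A →+* F) (φ : A →+* K) (hφ : Function.Injective φ) (M : Matrix m n A) :
    (M.map π).rank ≤ (M.map φ).rank := by
  classical
  obtain ⟨f, g, hdet⟩ := exists_det_ne_zero (M.map π)
  have hsubπ : (M.map π).submatrix f g = (M.submatrix f g).map π := rfl
  have hsubφ : (M.map φ).submatrix f g = (M.submatrix f g).map φ := rfl
  have hmapdetπ : ((M.submatrix f g).map π).det = π (M.submatrix f g).det := by
    rw [← RingHom.mapMatrix_apply, ← RingHom.map_det]
  have hmapdetφ : ((M.submatrix f g).map φ).det = φ (M.submatrix f g).det := by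
    rw [← RingHom.mapMatrix_apply, ← RingHom.map_det]
  have hdA : (M.submatrix f g).det ≠ 0 := by
    intro h
    apply hdet
    rw [hsubπ, hmapdetπ, h, map_zero]
  have hdK : ((M.map φ).submatrix f g).det ≠ 0 := by
    rw [hsubφ, hmapdetφ]
    intro h
    exact hdA (hφ (h.trans (map_zero φ).symm))
  set Q := (M.map φ).submatrix f g with hQ
  have hcolsQ : LinearIndependent K (fun j i => Q i j) := by
    rw [Fintype.linearIndependent_iff]
    intro v hv
    by_contra hne
    push_neg at hne
    obtain ⟨j, hj⟩ := hne
    apply hdK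
    rw [← Matrix.exists_mulVec_eq_zero_iff]
    refine ⟨v, fun h => hj (congrFun h j), ?_⟩
    funext i
    have := congrFun hv i
    simpa [Matrix.mulVec, dotProduct, mul_comm] using this
  have hcolsP : LinearIndependent K (fun j => (M.map φ)ᵀ (g j)) := by
    apply LinearIndependent.of_comp (LinearMap.funLeft K K f)
    exact hcolsQ
  rw [(M.map φ).rank_eq_finrank_span_cols]
  have h1 : Module.finrank K (Submodule.span K (Set.range (fun j => (M.map φ)ᵀ (g j))))
      = (M.map π).rank := by
    rw [finrank_span_eq_card hcolsP, Fintype.card_fin]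
  rw [← h1]
  apply Submodule.finrank_mono
  apply Submodule.span_mono
  rintro _ ⟨j, rfl⟩
  exact ⟨g j, rfl⟩

end Minors

private lemma exists_direction_decomp {p k n : ℕ} [hpf : Fact p.Prime] (hk : 1 ≤ k) (hn : 1 ≤ n)
    (x : Fin n → ZMod (p ^ k)) :
    ∃ (c : ZMod (p ^ k)) (b : Fin n → ZMod (p ^ k)), IsDirection b ∧ x = c • b := by
  classical
  have hp : p.Prime := hpf.out
  haveI : NeZero (p ^ k) := ⟨pow_ne_zero k hp.ne_zero⟩
  have i0 : Fin n := ⟨0, hn⟩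
  have hb0 : IsDirection (fun _ : Fin n => (1 : ZMod (p ^ k))) := by
    intro q hq hdvd h0
    haveI := Fact.mk hq
    have h1 : (ZMod.castHom hdvd (ZMod q)) 1 = 0 := congrFun h0 i0
    rw [map_one] at h1
    exact one_ne_zero h1
  have hqp : ∀ q : ℕ, q.Prime → q ∣ p ^ k → q = p := fun q hq hdvd =>
    (Nat.prime_dvd_prime_iff_eq hq hp).mp (hq.dvd_of_dvd_pow hdvd)
  have hpk : p ∣ p ^ k := dvd_pow_self p (by omega)
  suffices H : ∀ (m : ℕ) (x : Fin n → ZMod (p ^ k)), (∑ i, (x i).val) ≤ m →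
      ∃ c b, IsDirection b ∧ x = c • b by exact H _ x le_rfl
  intro m
  induction m with
  | zero =>
    intro x hx
    refine ⟨0, _, hb0, ?_⟩
    funext i
    have : (x i).val = 0 := Finset.sum_eq_zero_iff.mp (Nat.le_zero.mp hx) i (Finset.mem_univ i)
    simp [ZMod.val_eq_zero] at this
    simp [this]
  | succ m ih =>
    intro x hx
    by_cases hred : (fun i => ZMod.castHom hpk (ZMod p) (x i)) = 0
    · by_cases hx0 : x = 0
      · exact ⟨0, _, hb0, by simp [hx0]⟩
      · have hdvd : ∀ i, p ∣ (x i).val := by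
          intro i
          have h1 : ZMod.cast (x i) = (0 : ZMod p) := congrFun hred i
          have h2 : ((x i).val : ZMod p) = 0 := by
            rw [ZMod.natCast_val]
            exact h1
          exact (ZMod.natCast_eq_zero_iff _ _).mp h2
        set z : Fin n → ZMod (p ^ k) := fun i => (((x i).val / p : ℕ) : ZMod (p ^ k)) with hz
        have hxz : x = (p : ZMod (p ^ k)) • z := by
          funext i
          have : (p : ZMod (p ^ k)) * (((x i).val / p : ℕ) : ZMod (p ^ k))
              = (((x i).val : ℕ) : ZMod (p ^ k)) := by
            rw [← Nat.cast_mul, Nat.mul_div_cancel' (hdvd i)]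
          simp only [Pi.smul_apply, smul_eq_mul, hz, this]
          exact (ZMod.natCast_rightInverse (x i)).symm
        have hzval : ∀ i, (z i).val = (x i).val / p := by
          intro i
          rw [hz]
          exact ZMod.val_cast_of_lt (lt_of_le_of_lt (Nat.div_le_self _ _) (ZMod.val_lt (x i)))
        have hlt : (∑ i, (z i).val) ≤ m := by
          have hstrict : (∑ i, (z i).val) < ∑ i, (x i).val := by
            obtain ⟨i1, hi1⟩ : ∃ i, x i ≠ 0 := by
              by_contra hall
              push_neg at hall
              exact hx0 (funext hall)
            apply Finset.sum_lt_sum (fun i _ => by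
              rw [hzval i]; exact Nat.div_le_self _ _)
            refine ⟨i1, Finset.mem_univ i1, ?_⟩
            rw [hzval i1]
            exact Nat.div_lt_self (Nat.pos_of_ne_zero (fun h =>
              hi1 ((ZMod.val_eq_zero _).mp h))) hp.one_lt
          omega
        obtain ⟨c', b, hb, hzcb⟩ := ih z hlt
        exact ⟨(p : ZMod (p ^ k)) * c', b, hb, by rw [hxz, hzcb, smul_smul]⟩
    · refine ⟨1, x, ?_, (one_smul _ x).symm⟩
      intro q hq hdvd
      obtain rfl := hqp q hq hdvd
      exact fun h => hred h

section CycSetup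

open Polynomial

variable {p k : ℕ} [hpf : Fact p.Prime] (hk : 1 ≤ k)

include hk in
private lemma cyc_setup :
    ∀ N : ℕ, N = p ^ k →
    ∃ (A : Type) (_ : CommRing A) (_ : IsDomain A) (ζ : A) (π : A →+* ZMod p),
      (N : A) ≠ 0 ∧ IsPrimitiveRoot ζ N ∧ π ζ = 1 ∧
      ∃ (K : Type) (_ : Field K) (φ : A →+* K), Function.Injective φ := by
  intro N hN
  have hp : p.Prime := hpf.out
  have hNpos : 0 < N := by rw [hN]; exact pow_pos hp.pos k
  set f : ℤ[X] := cyclotomic N ℤ with hf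
  have hirr : Irreducible f := cyclotomic.irreducible hNpos
  have hprime : Prime f := hirr.prime
  haveI hdom : IsDomain (AdjoinRoot f) := AdjoinRoot.isDomain_of_prime hprime
  set A := AdjoinRoot f with hA
  set ζ : A := AdjoinRoot.root f with hζ
  have hNA : (N : A) ≠ 0 := by
    intro h
    have h1 : AdjoinRoot.mk f (Polynomial.C (N : ℤ)) = 0 := by
      rw [AdjoinRoot.mk_C, map_natCast]
      exact h
    have h2 : f ∣ Polynomial.C (N : ℤ) := (AdjoinRoot.mk_eq_zero).mp h1
    have h3 : f.natDegree ≤ (Polynomial.C (N : ℤ)).natDegree :=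
      Polynomial.natDegree_le_of_dvd h2 (by
        simp only [ne_eq, Polynomial.C_eq_zero, Int.natCast_eq_zero]
        omega)
    rw [Polynomial.natDegree_C, hf, Polynomial.natDegree_cyclotomic] at h3
    have := Nat.totient_pos.mpr hNpos
    omega
  haveI : NeZero (N : A) := ⟨hNA⟩
  have hζroot : IsPrimitiveRoot ζ N := by
    have hroot : (cyclotomic N A).IsRoot ζ := by
      rw [← map_cyclotomic N (AdjoinRoot.of f), Polynomial.IsRoot, Polynomial.eval_map]
      exact AdjoinRoot.eval₂_root f
    exact (Polynomial.isRoot_cyclotomic_iff).mp hroot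
  have hev : Polynomial.eval₂ (Int.castRingHom (ZMod p)) 1 f = 0 := by
    obtain ⟨k', rfl⟩ : ∃ k', k = k' + 1 := ⟨k - 1, by omega⟩
    rw [hf, hN, eval₂_one_cyclotomic_prime_pow]
    exact ZMod.natCast_self p
  refine ⟨A, inferInstance, hdom, ζ, AdjoinRoot.lift (Int.castRingHom (ZMod p)) 1 hev,
    hNA, hζroot, AdjoinRoot.lift_root hev, FractionRing A, inferInstance,
    algebraMap A (FractionRing A), IsFractionRing.injective A (FractionRing A)⟩

end CycSetup

section CharSum

variable {A : Type*} [CommRing A] [IsDomain A] {N : ℕ} [NeZero N] {ζ : A}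

private lemma pow_val_add (hζN : ζ ^ N = 1) (s t : ZMod N) :
    ζ ^ (s + t).val = ζ ^ s.val * ζ ^ t.val := by
  have hmod : ∀ m : ℕ, ζ ^ (m % N) = ζ ^ m := by
    intro m
    conv_rhs => rw [← Nat.div_add_mod m N]
    rw [pow_add, pow_mul, hζN, one_pow, one_mul]
  rw [ZMod.val_add, hmod, pow_add]

private lemma char_sum (hζ : IsPrimitiveRoot ζ N) (d : ZMod N) :
    (∑ u : ZMod N, ζ ^ (u * d).val) = if d = 0 then (N : A) else 0 := by
  have hζN : ζ ^ N = 1 := hζ.pow_eq_one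
  by_cases hd : d = 0
  · subst hd
    simp only [mul_zero, ZMod.val_zero, pow_zero, Finset.sum_const, Finset.card_univ,
      ZMod.card, nsmul_eq_mul, mul_one, if_true]
  · rw [if_neg hd]
    have hone : ζ ^ d.val ≠ 1 := by
      apply hζ.pow_ne_one_of_pos_of_lt _ (ZMod.val_lt d)
      exact (fun h => hd ((ZMod.val_eq_zero d).mp h))
    have key : ζ ^ d.val * (∑ u : ZMod N, ζ ^ (u * d).val) = ∑ u : ZMod N, ζ ^ (u * d).val := by
      rw [Finset.mul_sum]
      have h1 : ∀ u : ZMod N, ζ ^ d.val * ζ ^ (u * d).val = ζ ^ ((u + 1) * d).val := by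
        intro u
        rw [add_mul, one_mul, pow_val_add hζN, mul_comm]
      simp_rw [h1]
      exact Fintype.sum_equiv (Equiv.addRight (1 : ZMod N)) _ _ (fun u => rfl)
    have h2 : (ζ ^ d.val - 1) * (∑ u : ZMod N, ζ ^ (u * d).val) = 0 := by
      rw [sub_mul, one_mul, key, sub_self]
    rcases mul_eq_zero.mp h2 with h | h
    · exact absurd (sub_eq_zero.mp h) hone
    · exact h

end CharSum

/-- Every Kakeya set `S ⊆ (Z/p^k Z)^n` satisfies
`|S| ≥ rank_{F_p}(W_{p^k,n})`, where `W_{p^k,n}` is the 0-1 point-hyperplane incidence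
matrix with `(x,y)` entry `1` iff `⟨x,y⟩ = 0 mod p^k`. -/
theorem kakeya_card_ge_rank_incidence
    {p : ℕ} [Fact p.Prime] {k n : ℕ} (hk : 1 ≤ k) (hn : 1 ≤ n)
    (S : Finset (Fin n → ZMod (p ^ k))) (hS : IsKakeyaSet S) :
    (Matrix.of fun x y : Fin n → ZMod (p ^ k) =>
        if ∑ i, x i * y i = 0 then (1 : ZMod p) else 0).rank ≤ S.card := by
  classical
  have hp : p.Prime := Fact.out
  haveI : NeZero (p ^ k) := ⟨pow_ne_zero k hp.ne_zero⟩
  obtain ⟨A, _, _, ζ, π, hNA, hζroot, hπζ, K, _, φ, hφ⟩ := cyc_setup hk (p ^ k) rfl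
  haveI : NeZero ((p ^ k : ℕ) : A) := ⟨hNA⟩
  have hζN : ζ ^ (p ^ k) = 1 := hζroot.pow_eq_one
  -- choice of decomposition and lines
  choose c b hbdir hxcb using fun x : Fin n → ZMod (p ^ k) => exists_direction_decomp hk hn x
  choose a ha using fun x : Fin n → ZMod (p ^ k) => hS (b x) (hbdir x)
  -- matrices over A
  set e : ZMod (p ^ k) → A := fun t => ζ ^ t.val with he
  have hπe : ∀ t, π (e t) = 1 := by
    intro t
    rw [he]
    simp only [map_pow, hπζ, one_pow]
  let line : (Fin n → ZMod (p ^ k)) → ZMod (p ^ k) → {s // s ∈ S} :=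
    fun x u => ⟨a x + (u * c x) • b x, ha x (u * c x)⟩
  set M : Matrix {s // s ∈ S} (Fin n → ZMod (p ^ k)) A :=
    fun s y => e (∑ i, (s : Fin n → ZMod (p ^ k)) i * y i) with hM
  set C : Matrix (Fin n → ZMod (p ^ k)) {s // s ∈ S} A :=
    fun x s => ((Finset.univ.filter (fun u : ZMod (p ^ k) => line x u = s)).card : A) with hC
  set G : Matrix (Fin n → ZMod (p ^ k)) (Fin n → ZMod (p ^ k)) A :=
    fun x y => e (∑ i, a x i * y i) * (if ∑ i, x i * y i = 0 then 1 else 0) with hG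
  -- key identity
  have hCM : ∀ x y, (C * M) x y = ((p ^ k : ℕ) : A) * G x y := by
    intro x y
    have h2 : (C * M) x y = ∑ u : ZMod (p ^ k), M (line x u) y := by
      rw [Matrix.mul_apply]
      rw [← Finset.sum_fiberwise' Finset.univ (line x) (fun s => M s y)]
      apply Finset.sum_congr rfl
      intro s _
      rw [Finset.sum_const, nsmul_eq_mul]
    have hxi : ∀ i, x i = c x * b x i := fun i => congrFun (hxcb x) i
    have hxby : (∑ i, x i * y i) = c x * ∑ i, b x i * y i := by
      rw [Finset.mul_sum]
      apply Finset.sum_congr rfl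
      intro i _
      rw [hxi i, mul_assoc]
    have h3 : ∀ u : ZMod (p ^ k), M (line x u) y
        = e ((∑ i, a x i * y i) + u * (∑ i, x i * y i)) := by
      intro u
      show e (∑ i, (a x + (u * c x) • b x) i * y i) = _
      congr 1
      calc (∑ i, (a x + (u * c x) • b x) i * y i)
          = (∑ i, (a x i * y i + (u * c x) * (b x i * y i))) := by
            apply Finset.sum_congr rfl
            intro i _
            show (a x i + (u * c x) * b x i) * y i = _
            ring
        _ = (∑ i, a x i * y i) + (u * c x) * (∑ i, b x i * y i) := by
            rw [Finset.sum_add_distrib, Finset.mul_sum]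
        _ = (∑ i, a x i * y i) + u * (∑ i, x i * y i) := by
            rw [hxby, mul_assoc]
    have h4 : ∀ u : ZMod (p ^ k), M (line x u) y
        = e (∑ i, a x i * y i) * e (u * (∑ i, x i * y i)) := by
      intro u
      rw [h3 u]
      simp only [he]
      exact pow_val_add hζN _ _
    rw [h2]
    simp_rw [h4]
    rw [← Finset.mul_sum]
    have h5 : (∑ u : ZMod (p ^ k), e (u * (∑ i, x i * y i)))
        = if (∑ i, x i * y i) = 0 then ((p ^ k : ℕ) : A) else 0 := by
      simp only [he]
      exact char_sum hζroot _
    rw [h5]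
    show _ = _ * (e (∑ i, a x i * y i) * _)
    by_cases hd : (∑ i, x i * y i) = 0
    · rw [if_pos hd, if_pos hd]
      ring
    · rw [if_neg hd, if_neg hd]
      ring
  -- reduction mod p equals the incidence matrix
  have hGπ : G.map π = Matrix.of (fun x y : Fin n → ZMod (p ^ k) =>
      if ∑ i, x i * y i = 0 then (1 : ZMod p) else 0) := by
    funext x y
    show π (e (∑ i, a x i * y i) * (if ∑ i, x i * y i = 0 then 1 else 0)) = _
    rw [map_mul, hπe, one_mul, apply_ite π, map_one, map_zero]
    rfl
  have key1 : (G.map π).rank ≤ (G.map φ).rank := rank_map_le_rank_map π φ hφ G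
  have hNK : (((p ^ k : ℕ) : K)) ≠ 0 := by
    intro h
    apply hNA
    apply hφ
    rw [map_natCast, map_zero, h]
  have hfact : ((((p ^ k : ℕ) : K))⁻¹ • (C.map φ)) * (M.map φ) = G.map φ := by
    rw [Matrix.smul_mul, ← Matrix.map_mul]
    funext x y
    show (((p ^ k : ℕ) : K))⁻¹ * φ ((C * M) x y) = φ (G x y)
    rw [hCM x y, map_mul, map_natCast, ← mul_assoc, inv_mul_cancel₀ hNK, one_mul]
  have key2 : (G.map φ).rank ≤ S.card := by
    rw [← hfact]
    calc (((((p ^ k : ℕ) : K))⁻¹ • (C.map φ)) * (M.map φ)).rank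
        ≤ (M.map φ).rank := Matrix.rank_mul_le_right _ _
      _ ≤ Fintype.card {s // s ∈ S} := Matrix.rank_le_card_height _
      _ = S.card := Fintype.card_coe S
  rw [← hGπ]
  exact le_trans key1 key2
end
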